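/- arXiv:1403.3031 — 6 statements merged into one kernel-verified Lean document; each statement's English description precedes it below -/
import Mathlib

section
/- Let p = {p_k : k ≥ 1} be a probability distribution on a countable index set and define ζ_{1,v} = Σ_{k≥1} p_k (1-p_k)^v for v ≥ 0. If Shannon's entropy H = -Σ_{k≥1} p_k ln(p_k) is finite, then H = Σ_{v=1}^∞ (1/v) ζ_{1,v}. -/
/-- If Shannon's entropy `H = -∑_k p_k ln p_k` is finite, then
`H = ∑_{v=1}^∞ (1/v) ζ_{1,v}` where `ζ_{1,v} = ∑_k p_k (1-p_k)^v`. -/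
theorem shannon_entropy_entropic_basis_representation
    (p : ℕ → ℝ) (hp : ∀ k, 0 ≤ p k) (hps : HasSum p 1)
    (hH : Summable fun k => p k * Real.log (p k)) :
    -∑' k, p k * Real.log (p k) =
      ∑' v : ℕ, (1 / (v + 1 : ℝ)) * ∑' k, p k * (1 - p k) ^ (v + 1) := by
  have hle : ∀ k, p k ≤ 1 := fun k => le_hasSum hps k (fun j _ => hp j)
  set F : ℕ → ℕ → ℝ := fun k v => (1 / (v + 1 : ℝ)) * (p k * (1 - p k) ^ (v + 1)) with hF
  have hFnn : ∀ k v, 0 ≤ F k v := by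
    intro k v
    have h1 : (0:ℝ) ≤ 1 - p k := by linarith [hle k]
    have : (0:ℝ) < (v:ℝ) + 1 := by positivity
    exact mul_nonneg (by positivity) (mul_nonneg (hp k) (pow_nonneg h1 _))
  have hinner : ∀ k, HasSum (fun v => F k v) (p k * (-Real.log (p k))) := by
    intro k
    rcases eq_or_lt_of_le (hp k) with h | h
    · have : (fun v => F k v) = fun _ => (0:ℝ) := by
        funext v; simp [hF, ← h]
      rw [this, ← h]
      simpa using hasSum_zero
    · have hx : |1 - p k| < 1 := by
        rw [abs_lt]; constructor <;> nlinarith [hle k]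
      have h1 := (Real.hasSum_pow_div_log_of_abs_lt_one hx).mul_left (p k)
      have h2 : (1 : ℝ) - (1 - p k) = p k := by ring
      rw [h2] at h1
      convert h1 using 2 with v
      · rfl
      · simp only [hF]; ring
  have hsumv : ∀ k, Summable (fun v => F k v) := fun k => (hinner k).summable
  have houter : Summable (fun k => ∑' v, F k v) := by
    have h : (fun k => ∑' v, F k v) = fun k => -(p k * Real.log (p k)) := by
      funext k; rw [(hinner k).tsum_eq]; ring
    rw [h]; exact hH.neg
  have hprod : Summable (Function.uncurry F) :=
    (summable_prod_of_nonneg (fun q => hFnn q.1 q.2)).2 ⟨hsumv, houter⟩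
  have h1 : ∑' v, ∑' k, F k v = ∑' k, ∑' v, F k v := hprod.tsum_comm
  have hL : ∑' k, ∑' v, F k v = -∑' k, p k * Real.log (p k) := by
    rw [← tsum_neg]
    exact tsum_congr fun k => by rw [(hinner k).tsum_eq]; ring
  rw [← hL, ← h1]
  exact tsum_congr fun v => tsum_mul_left
end

section
/- Let p = {p_k : 1 ≤ k ≤ K} be a probability distribution with finitely many strictly positive masses p_k > 0, and define ζ_{1,v} = Σ_{k=1}^K p_k (1-p_k)^v for v ≥ 0. Then for every r > 0 with r ≠ 1, Rényi's equivalent entropy h_r = Σ_{k=1}^K p_k^r satisfies h_r = ζ_{1,0} + Σ_{v=1}^∞ (Π_{i=1}^v ((i-r)/i)) ζ_{1,v}, where the series converges. -/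
open Finset

/-- Recurrence for the coefficients. -/
lemma coeff_succ (r : ℝ) (v : ℕ) :
    (∏ i ∈ Finset.Icc 1 (v + 1), (((i : ℝ) - r) / i)) =
      (∏ i ∈ Finset.Icc 1 v, (((i : ℝ) - r) / i)) * (((v : ℝ) + 1 - r) / ((v : ℝ) + 1)) := by
  rw [Finset.prod_Icc_succ_top (Nat.succ_le_succ (Nat.zero_le v))]
  push_cast
  ring

/-- The coefficients are bounded. -/
lemma coeff_bounded (r : ℝ) (hr : 0 < r) :
    ∃ M : ℝ, ∀ v : ℕ, |∏ i ∈ Finset.Icc 1 v, (((i : ℝ) - r) / i)| ≤ M := by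
  set d : ℕ → ℝ := fun v => ∏ i ∈ Finset.Icc 1 v, (((i : ℝ) - r) / i) with hd
  set N : ℕ := ⌈r⌉₊ with hN
  have hrN : r ≤ (N : ℝ) := Nat.le_ceil r
  refine ⟨∑ v ∈ Finset.range (N + 1), |d v|, fun v => ?_⟩
  have hmono : ∀ v, N ≤ v → |d v| ≤ |d N| := by
    intro v hv
    induction v, hv using Nat.le_induction with
    | base => exact le_rfl
    | succ v hv ih =>
      have hv' : r ≤ (v : ℝ) + 1 := le_trans hrN (by exact_mod_cast Nat.le_succ_of_le hv)
      have habs : |((v : ℝ) + 1 - r) / ((v : ℝ) + 1)| ≤ 1 := by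
        rw [abs_div]
        rw [div_le_one (by positivity : (0:ℝ) < |(v : ℝ) + 1|)]
        rw [abs_of_nonneg (by linarith), abs_of_nonneg (by positivity)]
        linarith
      calc |d (v + 1)| = |d v| * |((v : ℝ) + 1 - r) / ((v : ℝ) + 1)| := by
              simp only [hd]; rw [coeff_succ r v, abs_mul]
        _ ≤ |d v| * 1 := by
              exact mul_le_mul_of_nonneg_left habs (abs_nonneg _)
        _ ≤ |d N| := by rw [mul_one]; exact ih
  rcases le_or_gt v N with hvN | hvN
  · exact Finset.single_le_sum (f := fun v => |d v|) (fun i _ => abs_nonneg _)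
      (Finset.mem_range.2 (Nat.lt_succ_of_le hvN))
  · calc |d v| ≤ |d N| := hmono v hvN.le
      _ ≤ ∑ v ∈ Finset.range (N + 1), |d v| :=
          Finset.single_le_sum (f := fun v => |d v|) (fun i _ => abs_nonneg _)
            (Finset.mem_range.2 (Nat.lt_succ_of_le le_rfl))

/-- Binomial series: for `0 ≤ y < 1`,
`(1-y)^(r-1) = ∑_v (∏_{i=1}^v ((i-r)/i)) y^v`. -/
lemma binomial_hasSum (r : ℝ) (hr : 0 < r) (y : ℝ) (hy0 : 0 ≤ y) (hy1 : y < 1) :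
    HasSum (fun v : ℕ => (∏ i ∈ Finset.Icc 1 v, (((i : ℝ) - r) / i)) * y ^ v)
      ((1 - y) ^ (r - 1)) := by
  obtain ⟨M, hM⟩ := coeff_bounded r hr
  set d : ℕ → ℝ := fun v => ∏ i ∈ Finset.Icc 1 v, (((i : ℝ) - r) / i) with hd
  have hM0 : 0 ≤ M := le_trans (abs_nonneg _) (hM 0)
  set b : ℝ := (1 + y) / 2 with hb
  have hb0 : 0 < b := by rw [hb]; linarith
  have hyb : y < b := by rw [hb]; linarith
  have hb1 : b < 1 := by rw [hb]; linarith
  set t : Set ℝ := Metric.ball (0 : ℝ) b with ht_def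
  have ht : IsOpen t := Metric.isOpen_ball
  have h't : IsPreconnected t := (convex_ball (0 : ℝ) b).isPreconnected
  have hmem : ∀ z ∈ t, |z| < b := by
    intro z hz
    simpa [Real.norm_eq_abs] using mem_ball_zero_iff.1 hz
  have hyt : y ∈ t := by
    rw [ht_def, mem_ball_zero_iff, Real.norm_eq_abs, abs_of_nonneg hy0]
    exact hyb
  have h0t : (0 : ℝ) ∈ t := Metric.mem_ball_self hb0
  have hbnorm : ‖b‖ < 1 := by rw [Real.norm_eq_abs, abs_of_pos hb0]; exact hb1
  -- summability of the series and of `n * (series)`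
  have hA : ∀ z ∈ t, Summable (fun v : ℕ => d v * z ^ v) := by
    intro z hz
    apply Summable.of_norm_bounded
      ((summable_geometric_of_norm_lt_one hbnorm).mul_left M)
    intro v
    rw [norm_mul, Real.norm_eq_abs, Real.norm_eq_abs, abs_pow]
    exact mul_le_mul (hM v) (pow_le_pow_left₀ (abs_nonneg z) (hmem z hz).le v)
      (by positivity) hM0
  have hB : ∀ z ∈ t, Summable (fun v : ℕ => (v : ℝ) * (d v * z ^ v)) := by
    intro z hz
    have hgeo : Summable (fun v : ℕ => M * ((v : ℝ) * b ^ v)) := by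
      have := summable_pow_mul_geometric_of_norm_lt_one (R := ℝ) 1 hbnorm
      exact (this.congr fun n => by rw [pow_one]).mul_left M
    apply Summable.of_norm_bounded hgeo
    intro v
    rw [norm_mul, norm_mul, Real.norm_eq_abs, Real.norm_eq_abs, Real.norm_eq_abs, abs_pow,
      Nat.abs_cast]
    calc (v : ℝ) * (|d v| * |z| ^ v) ≤ (v : ℝ) * (M * b ^ v) := by
          apply mul_le_mul_of_nonneg_left _ (Nat.cast_nonneg v)
          exact mul_le_mul (hM v) (pow_le_pow_left₀ (abs_nonneg z) (hmem z hz).le v)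
            (by positivity) hM0
      _ = M * ((v : ℝ) * b ^ v) := by ring
  -- term-by-term differentiation
  set g' : ℕ → ℝ → ℝ := fun n z => d n * ((n : ℝ) * z ^ (n - 1)) with hg'def
  have hderivg : ∀ (n : ℕ) (z : ℝ), HasDerivAt (fun w => d n * w ^ n) (g' n z) z :=
    fun n z => (hasDerivAt_pow n z).const_mul (d n)
  have hu1 : Summable (fun n : ℕ => (n : ℝ) * b ^ (n - 1)) := by
    have hsum : Summable (fun n : ℕ => ((n : ℝ) + 1) * b ^ n) := by
      have h1 := summable_pow_mul_geometric_of_norm_lt_one (R := ℝ) 1 hbnorm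
      have h2 := summable_geometric_of_norm_lt_one hbnorm
      have := h1.add h2
      refine this.congr fun n => ?_
      rw [pow_one]; ring
    refine (summable_nat_add_iff 1).1 (hsum.congr fun n => ?_)
    push_cast
    simp
  have hu : Summable (fun n : ℕ => M * ((n : ℝ) * b ^ (n - 1))) := hu1.mul_left M
  have hbound : ∀ (n : ℕ), ∀ z ∈ t, ‖g' n z‖ ≤ M * ((n : ℝ) * b ^ (n - 1)) := by
    intro n z hz
    rw [hg'def]
    simp only [norm_mul, Real.norm_eq_abs, abs_pow, Nat.abs_cast]
    have h1 : ((n : ℝ)) * |z| ^ (n - 1) ≤ (n : ℝ) * b ^ (n - 1) :=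
      mul_le_mul_of_nonneg_left
        (pow_le_pow_left₀ (abs_nonneg z) (hmem z hz).le (n - 1)) (Nat.cast_nonneg n)
    exact mul_le_mul (hM n) h1 (by positivity) hM0
  have hg0 : Summable (fun n : ℕ => d n * (0 : ℝ) ^ n) := hA 0 h0t
  set F : ℝ → ℝ := fun w => ∑' n : ℕ, d n * w ^ n with hFdef
  have hF : ∀ z ∈ t, HasDerivAt F (∑' n : ℕ, g' n z) z := by
    intro z hz
    exact hasDerivAt_tsum_of_isPreconnected hu ht h't (fun n w _ => hderivg n w)
      hbound h0t hg0 hz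
  -- the ODE  (1-z) F'(z) = (1-r) F(z)
  have key : ∀ z ∈ t, (1 - z) * (∑' n : ℕ, g' n z) = (1 - r) * F z := by
    intro z hz
    have hAz := hA z hz
    have hBz := hB z hz
    have h1 : HasSum (fun n : ℕ => g' (n + 1) z)
        ((∑' n : ℕ, (n : ℝ) * (d n * z ^ n)) + (1 - r) * F z) := by
      have hs := hBz.hasSum.add (hAz.hasSum.mul_left (1 - r))
      have heq : (fun n : ℕ => g' (n + 1) z) =
          fun n : ℕ => (n : ℝ) * (d n * z ^ n) + (1 - r) * (d n * z ^ n) := by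
        funext n
        show d (n + 1) * (((n + 1 : ℕ) : ℝ) * z ^ (n + 1 - 1)) = _
        have hrec : d (n + 1) = d n * (((n : ℝ) + 1 - r) / ((n : ℝ) + 1)) := coeff_succ r n
        rw [hrec]
        have hne : ((n : ℝ) + 1) ≠ 0 := by positivity
        simp only [Nat.add_sub_cancel]
        push_cast
        field_simp
        ring
      rw [heq]
      exact hs
    have h0 : g' 0 z = 0 := by simp [hg'def]
    have h2 : HasSum (fun n : ℕ => g' n z)
        ((∑' n : ℕ, (n : ℝ) * (d n * z ^ n)) + (1 - r) * F z) := by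
      refine (hasSum_nat_add_iff' 1).1 ?_
      simpa [h0] using h1
    have hT : (∑' n : ℕ, g' n z) =
        (∑' n : ℕ, (n : ℝ) * (d n * z ^ n)) + (1 - r) * F z := h2.tsum_eq
    have hzT : z * (∑' n : ℕ, g' n z) = ∑' n : ℕ, (n : ℝ) * (d n * z ^ n) := by
      rw [← tsum_mul_left]
      congr 1
      funext n
      cases n with
      | zero => simp [hg'def]
      | succ m =>
          show z * (d (m + 1) * (((m + 1 : ℕ) : ℝ) * z ^ (m + 1 - 1))) =
            ((m + 1 : ℕ) : ℝ) * (d (m + 1) * z ^ (m + 1))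
          simp only [Nat.add_sub_cancel]
          rw [pow_succ]
          ring
    calc (1 - z) * (∑' n : ℕ, g' n z)
        = (∑' n : ℕ, g' n z) - z * (∑' n : ℕ, g' n z) := by ring
      _ = (1 - r) * F z := by rw [hzT, hT]; ring
  -- the quotient is constant
  set φ : ℝ → ℝ := fun z => F z * (1 - z) ^ (1 - r) with hφdef
  have hφderiv : ∀ z ∈ t, HasDerivAt φ 0 z := by
    intro z hz
    have hzb : z < b := (abs_lt.1 (hmem z hz)).2
    have hz1 : (0 : ℝ) < 1 - z := by linarith
    have h1 : HasDerivAt (fun w : ℝ => 1 - w) (-1) z := (hasDerivAt_id z).const_sub 1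
    have h2 := Real.hasDerivAt_rpow_const (x := 1 - z) (p := 1 - r) (Or.inl hz1.ne')
    have hpow : HasDerivAt (fun w : ℝ => (1 - w) ^ (1 - r))
        ((1 - r) * (1 - z) ^ (1 - r - 1) * (-1)) z := h2.comp z h1
    have htot := (hF z hz).mul hpow
    have hval : (∑' n : ℕ, g' n z) * (1 - z) ^ (1 - r) +
        F z * ((1 - r) * (1 - z) ^ (1 - r - 1) * (-1)) = 0 := by
      have hkey := key z hz
      have hsub : (1 - z) ^ (1 - r - 1) = (1 - z) ^ (1 - r) / (1 - z) := by
        rw [Real.rpow_sub hz1, Real.rpow_one]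
      rw [hsub]
      field_simp
      linear_combination ((1 - z) ^ (1 - r)) * hkey
    rw [hφdef]
    have := htot
    rw [hval] at this
    exact this
  have hIccmem : ∀ x ∈ Set.Icc (0 : ℝ) y, x ∈ t := by
    intro x hx
    rw [ht_def, mem_ball_zero_iff, Real.norm_eq_abs, abs_of_nonneg hx.1]
    exact lt_of_le_of_lt hx.2 hyb
  have hcont : ContinuousOn φ (Set.Icc 0 y) := fun x hx =>
    ((hφderiv x (hIccmem x hx)).continuousAt).continuousWithinAt
  have hconst := constant_of_has_deriv_right_zero hcont
    (fun x hx => (hφderiv x (hIccmem x (Set.mem_Icc_of_Ico hx))).hasDerivWithinAt)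
  have hφy : φ y = φ 0 := hconst y ⟨hy0, le_rfl⟩
  -- value at 0
  have hd0 : d 0 = 1 := by
    simp only [hd]
    rw [Finset.Icc_eq_empty (by norm_num : ¬(1 : ℕ) ≤ 0), Finset.prod_empty]
  have hF0 : F 0 = 1 := by
    have hs : HasSum (fun n : ℕ => d n * (0 : ℝ) ^ n) (d 0 * (0 : ℝ) ^ (0 : ℕ)) :=
      hasSum_single 0 (fun n hn => by simp [zero_pow hn])
    have hF0' : F 0 = ∑' n : ℕ, d n * (0 : ℝ) ^ n := rfl
    rw [hF0', hs.tsum_eq, hd0]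
    norm_num
  have hφ0 : φ 0 = 1 := by
    rw [hφdef]
    simp [hF0, Real.one_rpow]
  have h1y : (0 : ℝ) < 1 - y := by linarith
  have hφy1 : F y * (1 - y) ^ (1 - r) = 1 := by
    have := hφy
    rw [hφ0] at this
    exact this
  have hprod : (1 - y) ^ (1 - r) * (1 - y) ^ (r - 1) = 1 := by
    rw [← Real.rpow_add h1y]
    norm_num
  have hFy : F y = (1 - y) ^ (r - 1) := by
    calc F y = F y * ((1 - y) ^ (1 - r) * (1 - y) ^ (r - 1)) := by rw [hprod, mul_one]
      _ = (F y * (1 - y) ^ (1 - r)) * (1 - y) ^ (r - 1) := by ring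
      _ = (1 - y) ^ (r - 1) := by rw [hφy1, one_mul]
  have hfinal := (hA y hyt).hasSum
  rw [show (∑' v : ℕ, d v * y ^ v) = F y from rfl, hFy] at hfinal
  exact hfinal

/-- For a probability distribution with finitely many strictly positive
masses, Rényi's equivalent entropy `h_r = ∑_k p_k^r` (`r > 0`, `r ≠ 1`) satisfies
`h_r = ζ_{1,0} + ∑_{v=1}^∞ (∏_{i=1}^v ((i-r)/i)) ζ_{1,v}`, the series converging. -/
theorem renyi_equivalent_entropy_entropic_basis_representation
    (K : ℕ) (p : Fin K → ℝ) (hp : ∀ k, 0 < p k) (hps : ∑ k, p k = 1)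
    (r : ℝ) (hr : 0 < r) (hr1 : r ≠ 1) :
    HasSum
      (fun v : ℕ =>
        (∏ i ∈ Finset.Icc 1 (v + 1), (((i : ℝ) - r) / i)) *
          ∑ k, p k * (1 - p k) ^ (v + 1))
      ((∑ k, p k ^ r) - ∑ k, p k * (1 - p k) ^ (0 : ℕ)) := by
  have hple : ∀ k, p k ≤ 1 := by
    intro k
    rw [← hps]
    exact Finset.single_le_sum (fun i _ => (hp i).le) (Finset.mem_univ k)
  -- per-mass binomial series
  have hk : ∀ k, HasSum
      (fun v : ℕ => p k * ((∏ i ∈ Finset.Icc 1 v, (((i : ℝ) - r) / i)) * (1 - p k) ^ v))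
      (p k ^ r) := by
    intro k
    have h := binomial_hasSum r hr (1 - p k) (by linarith [hple k]) (by linarith [hp k])
    have h1 : (1 : ℝ) - (1 - p k) = p k := by ring
    rw [h1] at h
    have h2 := h.mul_left (p k)
    have h3 : p k * p k ^ (r - 1) = p k ^ r := by
      rw [show r = 1 + (r - 1) by ring, Real.rpow_add (hp k), Real.rpow_one]
      ring_nf
    rwa [h3] at h2
  -- sum over k
  have hsum : HasSum
      (fun v : ℕ => (∏ i ∈ Finset.Icc 1 v, (((i : ℝ) - r) / i)) *
        ∑ k, p k * (1 - p k) ^ v)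
      (∑ k, p k ^ r) := by
    have := hasSum_sum (s := (Finset.univ : Finset (Fin K)))
      (f := fun k (v : ℕ) =>
        p k * ((∏ i ∈ Finset.Icc 1 v, (((i : ℝ) - r) / i)) * (1 - p k) ^ v))
      (a := fun k => p k ^ r) (fun k _ => hk k)
    convert this using 1
    funext v
    rw [Finset.mul_sum]
    exact Finset.sum_congr rfl fun k _ => by ring
  -- shift the index by one
  have := (hasSum_nat_add_iff' (f := fun v : ℕ =>
      (∏ i ∈ Finset.Icc 1 v, (((i : ℝ) - r) / i)) * ∑ k, p k * (1 - p k) ^ v) 1).2 hsum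
  simpa using this
end

section
/- Let p = {p_k : k ≥ 1} be a probability distribution on a countable index set and define ζ_{1,v} = Σ_{k≥1} p_k (1-p_k)^v for v ≥ 0. Then Emlen's index D = Σ_{k≥1} p_k e^{-p_k} satisfies D = Σ_{v=0}^∞ (e^{-1}/v!) ζ_{1,v}. -/
/-- Emlen's index `D = ∑_k p_k e^{-p_k}` satisfies
`D = ∑_{v=0}^∞ (e^{-1}/v!) ζ_{1,v}` where `ζ_{1,v} = ∑_k p_k (1-p_k)^v`. -/
theorem emlen_index_entropic_basis_representation
    (p : ℕ → ℝ) (hp : ∀ k, 0 ≤ p k) (hps : HasSum p 1) :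
    HasSum
      (fun v : ℕ => (Real.exp (-1) / (v.factorial : ℝ)) * ∑' k, p k * (1 - p k) ^ v)
      (∑' k, p k * Real.exp (-(p k))) := by
  have hle : ∀ k, p k ≤ 1 := fun k => le_hasSum hps k fun j _ => hp j
  set g : ℕ × ℕ → ℝ :=
    fun x => Real.exp (-1) / (x.2.factorial : ℝ) * (p x.1 * (1 - p x.1) ^ x.2) with hg
  -- per-k sum over v
  have hexp : ∀ k, HasSum (fun v => g (k, v)) (p k * Real.exp (-(p k))) := by
    intro k
    have h := NormedSpace.expSeries_div_hasSum_exp (1 - p k)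
    have h2 := h.mul_left (Real.exp (-1) * p k)
    have he : Real.exp (-1) * p k * NormedSpace.exp (1 - p k) = p k * Real.exp (-(p k)) := by
      rw [← Real.exp_eq_exp_ℝ, mul_comm (Real.exp (-1)) (p k), mul_assoc, ← Real.exp_add]
      norm_num [Real.exp_eq_exp_ℝ]
      left; ring_nf
    rw [he] at h2
    convert h2 using 2 with v
    · rfl
    simp only [hg]
    ring
  have hnn : ∀ x : ℕ × ℕ, 0 ≤ g x := by
    intro x
    have h1 : (0:ℝ) ≤ 1 - p x.1 := by linarith [hle x.1]
    exact mul_nonneg (div_nonneg (Real.exp_pos _).le (Nat.cast_nonneg _)) (mul_nonneg (hp _) (pow_nonneg h1 _))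
  have hsum2 : Summable fun k => p k * Real.exp (-(p k)) := by
    apply Summable.of_nonneg_of_le (fun k => mul_nonneg (hp k) (Real.exp_pos _).le) _ hps.summable
    intro k
    have : Real.exp (-(p k)) ≤ 1 := Real.exp_le_one_iff.2 (by linarith [hp k])
    nlinarith [hp k]
  have hsumg : Summable g := by
    refine (summable_prod_of_nonneg hnn).2 ⟨fun k => (hexp k).summable, ?_⟩
    have : (fun k => ∑' v, g (k, v)) = fun k => p k * Real.exp (-(p k)) := by
      funext k; exact (hexp k).tsum_eq
    rw [this]; exact hsum2
  have hS := hsumg.hasSum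
  have hk := hS.prod_fiberwise hexp
  have hswap : HasSum (fun x : ℕ × ℕ => g x.swap) (∑' x, g x) :=
    (Equiv.prodComm ℕ ℕ).hasSum_iff.2 hS
  have hinner : ∀ v : ℕ, HasSum (fun k => g (k, v))
      ((Real.exp (-1) / (v.factorial : ℝ)) * ∑' k, p k * (1 - p k) ^ v) := by
    intro v
    have hs : Summable fun k => p k * (1 - p k) ^ v := by
      apply Summable.of_nonneg_of_le (fun k => by
        have h1 : (0:ℝ) ≤ 1 - p k := by linarith [hle k]
        have := hp k; positivity) _ hps.summable
      intro k
      have h1 : (0:ℝ) ≤ 1 - p k := by linarith [hle k]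
      have h2 : (1 - p k) ^ v ≤ 1 := pow_le_one₀ h1 (by linarith [hp k])
      nlinarith [hp k]
    exact hs.hasSum.mul_left _
  have hv := hswap.prod_fiberwise fun v => hinner v
  rwa [hk.tsum_eq]
end

section
/- Let X_1, ..., X_n be i.i.d. samples from a countable alphabet 𝒳 = {ℓ_k} according to a probability distribution p = {p_k}, let x_k = Σ_{i=1}^n 1[X_i = ℓ_k] and p̂_k = x_k/n. Then for every integer v with 1 ≤ v ≤ n-1, the statistic Σ_{k≥1} p̂_k Π_{j=1}^v (1 - (x_k - 1)/(n - j)) is an unbiased estimator of ζ_{1,v} = Σ_{k≥1} p_k (1-p_k)^v, i.e., its expectation equals ζ_{1,v}. -/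
open MeasureTheory ProbabilityTheory

namespace ZZaux

open Finset

/-- The per-symbol statistic, as a function of the count `m`. -/
noncomputable def Fst (n v m : ℕ) : ℝ :=
  (m : ℝ) / n * ∏ j ∈ Finset.Icc 1 v, (1 - ((m : ℝ) - 1) / ((n : ℝ) - (j : ℝ)))

lemma cast_descFactorial (a : ℕ) :
    ∀ v : ℕ, ((a.descFactorial v : ℕ) : ℝ) = ∏ i ∈ range v, ((a : ℝ) - i)
  | 0 => by simp
  | v + 1 => by
    rw [Nat.descFactorial_succ, prod_range_succ, ← cast_descFactorial a v]
    rcases le_or_gt v a with h | h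
    · rw [Nat.cast_mul, Nat.cast_sub h]
      ring
    · rw [Nat.descFactorial_eq_zero_iff_lt.2 h]
      simp

lemma descFactorial_pred_pos {n v : ℕ} (hvn : v ≤ n - 1) :
    0 < (n - 1).descFactorial v := by
  rw [Nat.descFactorial_eq_factorial_mul_choose]
  exact Nat.mul_pos (Nat.factorial_pos v) (Nat.choose_pos hvn)

lemma Fst_formula {n v m : ℕ} (hm1 : 1 ≤ m) (hmn : m ≤ n) (hvn : v ≤ n - 1) :
    Fst n v m = ((m : ℝ) * ((n - m).descFactorial v : ℕ)) /
      ((n : ℝ) * (((n - 1).descFactorial v : ℕ))) := by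
  have hn1 : 1 ≤ n := hm1.trans hmn
  have hprod : ∏ j ∈ Finset.Icc 1 v, (1 - ((m : ℝ) - 1) / ((n : ℝ) - (j : ℝ)))
      = (((n - m).descFactorial v : ℕ) : ℝ) / (((n - 1).descFactorial v : ℕ) : ℝ) := by
    rw [cast_descFactorial, cast_descFactorial, ← Finset.prod_div_distrib]
    rw [show Finset.Icc 1 v = Finset.Ico 1 (v + 1) by rfl, prod_Ico_eq_prod_range]
    apply Finset.prod_congr (by simp)
    intro i hi
    simp only [Finset.mem_range] at hi
    have hiv : i + 1 ≤ v := by omega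
    have hin : (i : ℝ) + 1 < n := by
      have : i + 1 < n := by omega
      exact_mod_cast this
    have h1 : (((n - m : ℕ) : ℝ)) = (n : ℝ) - m := by
      rw [Nat.cast_sub hmn]
    have h2 : (((n - 1 : ℕ) : ℝ)) = (n : ℝ) - 1 := by
      rw [Nat.cast_sub hn1]; simp
    have hd : (n : ℝ) - 1 - (i : ℝ) ≠ 0 := by
      have : (i : ℝ) + 1 < (n : ℝ) := hin
      intro h; linarith
    rw [h1, h2]
    push_cast
    rw [show (n : ℝ) - (1 + (i : ℝ)) = (n : ℝ) - 1 - i by ring]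
    field_simp
    ring
  rw [Fst, hprod]
  ring

lemma Fst_nonneg {n v m : ℕ} (hmn : m ≤ n) (hvn : v ≤ n - 1) : 0 ≤ Fst n v m := by
  rcases Nat.eq_zero_or_pos m with hm | hm
  · simp [Fst, hm]
  · rw [Fst_formula hm hmn hvn]
    apply div_nonneg
    · positivity
    · positivity

lemma nat_identity {n v m : ℕ} (hm1 : 1 ≤ m) (hmn : m ≤ n) (hvn : v ≤ n - 1) :
    m * (n.choose m * (n - m).descFactorial v) =
      n * ((n - 1).descFactorial v * (n - 1 - v).choose (m - 1)) := by
  rw [Nat.descFactorial_eq_factorial_mul_choose, Nat.descFactorial_eq_factorial_mul_choose]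
  have key : m * n.choose m * (n - m).choose v =
      n * ((n - 1).choose v * (n - 1 - v).choose (m - 1)) := by
    have hmn' : m * n.choose m = n * (n - 1).choose (m - 1) := by
      have h := Nat.add_one_mul_choose_eq (n - 1) (m - 1)
      have e5 : (n - 1) + 1 = n := by omega
      have e6 : (m - 1) + 1 = m := by omega
      rw [e5, e6] at h
      rw [h]; exact Nat.mul_comm _ _
    have hnm : n - m = (n - 1) - (m - 1) := by omega
    have hinner : (n - 1).choose (m - 1) * ((n - 1 - (m - 1)).choose v) =
        (n - 1).choose v * (n - 1 - v).choose (m - 1) := by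
      rcases le_or_gt (m - 1 + v) (n - 1) with hle | hlt
      · have h1 := Nat.choose_mul (n := n - 1) (k := m - 1 + v) (s := m - 1)
          (Nat.le_add_right _ _)
        have h2 := Nat.choose_mul (n := n - 1) (k := m - 1 + v) (s := v)
          (Nat.le_add_left _ _)
        have e1 : m - 1 + v - (m - 1) = v := by omega
        have e2 : m - 1 + v - v = m - 1 := by omega
        rw [e1] at h1
        rw [e2] at h2
        have hsym : (m - 1 + v).choose (m - 1) = (m - 1 + v).choose v := by
          have h3 := Nat.choose_symm (Nat.le_add_right (m - 1) v)
          rw [Nat.add_sub_cancel_left] at h3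
          exact h3.symm
        calc (n - 1).choose (m - 1) * ((n - 1 - (m - 1)).choose v)
            = (n - 1).choose (m - 1 + v) * (m - 1 + v).choose (m - 1) := h1.symm
          _ = (n - 1).choose (m - 1 + v) * (m - 1 + v).choose v := by rw [hsym]
          _ = (n - 1).choose v * (n - 1 - v).choose (m - 1) := h2
      · have hz1 : (n - 1 - (m - 1)).choose v = 0 := Nat.choose_eq_zero_of_lt (by omega)
        have hz2 : (n - 1 - v).choose (m - 1) = 0 := Nat.choose_eq_zero_of_lt (by omega)
        rw [hz1, hz2, mul_zero, mul_zero]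
    calc m * n.choose m * (n - m).choose v
        = n * (n - 1).choose (m - 1) * (n - m).choose v := by rw [hmn']
      _ = n * ((n - 1).choose (m - 1) * ((n - 1 - (m - 1)).choose v)) := by
          rw [hnm, Nat.mul_assoc]
      _ = n * ((n - 1).choose v * (n - 1 - v).choose (m - 1)) := by rw [hinner]
  -- now multiply by v!
  calc m * (n.choose m * (v.factorial * (n - m).choose v))
      = v.factorial * (m * n.choose m * (n - m).choose v) := by ring
    _ = v.factorial * (n * ((n - 1).choose v * (n - 1 - v).choose (m - 1))) := by rw [key]
    _ = n * (v.factorial * (n - 1).choose v * (n - 1 - v).choose (m - 1)) := by ring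

lemma sum_identity {n v : ℕ} (hv1 : 1 ≤ v) (hvn : v ≤ n - 1) (p q : ℝ) (hpq : p + q = 1) :
    ∑ m ∈ range (n + 1), (n.choose m : ℝ) * p ^ m * q ^ (n - m) * Fst n v m = p * q ^ v := by
  have hn2 : 2 ≤ n := by omega
  have hn0 : (n : ℝ) ≠ 0 := by positivity
  have hD0 : (((n - 1).descFactorial v : ℕ) : ℝ) ≠ 0 := by
    exact_mod_cast (descFactorial_pred_pos hvn).ne'
  rw [Finset.sum_range_succ']
  have h0 : (n.choose 0 : ℝ) * p ^ 0 * q ^ (n - 0) * Fst n v 0 = 0 := by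
    simp [Fst]
  rw [h0, add_zero]
  have hterm : ∀ t ∈ range n,
      (n.choose (t + 1) : ℝ) * p ^ (t + 1) * q ^ (n - (t + 1)) * Fst n v (t + 1)
        = ((n - 1 - v).choose t : ℝ) * p ^ (t + 1) * q ^ (n - 1 - t) := by
    intro t ht
    simp only [Finset.mem_range] at ht
    have hm1 : 1 ≤ t + 1 := Nat.le_add_left 1 t
    have hmn : t + 1 ≤ n := ht
    rw [Fst_formula hm1 hmn hvn]
    have hid := nat_identity hm1 hmn hvn
    have e3 : n - (t + 1) = n - 1 - t := by omega
    have e4 : (t + 1) - 1 = t := by omega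
    rw [e3, e4, ← Nat.mul_assoc, ← Nat.mul_assoc] at hid
    have hid' : ((t + 1 : ℕ) : ℝ) * ((n.choose (t + 1)) : ℝ) *
        (((n - 1 - t).descFactorial v : ℕ) : ℝ)
        = (n : ℝ) * ((((n - 1).descFactorial v : ℕ)) : ℝ) *
          (((n - 1 - v).choose t : ℕ) : ℝ) := by exact_mod_cast hid
    rw [e3]
    have hnR : (0 : ℝ) < (n : ℝ) := by exact_mod_cast (by omega : 0 < n)
    push_cast at hid'
    field_simp
    push_cast
    linear_combination (p ^ (t + 1) * q ^ (n - 1 - t)) * hid'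
  rw [Finset.sum_congr rfl hterm]
  have hsub : range (n - 1 - v + 1) ⊆ range n := by
    intro t ht; simp only [Finset.mem_range] at ht ⊢; omega
  calc ∑ t ∈ range n, ((n - 1 - v).choose t : ℝ) * p ^ (t + 1) * q ^ (n - 1 - t)
      = ∑ t ∈ range (n - 1 - v + 1), ((n - 1 - v).choose t : ℝ) * p ^ (t + 1) * q ^ (n - 1 - t) := by
        refine (Finset.sum_subset hsub ?_).symm
        intro t h1 h2
        simp only [Finset.mem_range] at h1 h2
        rw [Nat.choose_eq_zero_of_lt (by omega)]
        simp
    _ = p * q ^ v * ∑ t ∈ range (n - 1 - v + 1),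
          p ^ t * q ^ (n - 1 - v - t) * ((n - 1 - v).choose t : ℝ) := by
        rw [Finset.mul_sum]
        refine Finset.sum_congr rfl ?_
        intro t ht
        simp only [Finset.mem_range] at ht
        have hvt : v + (n - 1 - v - t) = n - 1 - t := by omega
        rw [← hvt, pow_add]
        ring
    _ = p * q ^ v * (p + q) ^ (n - 1 - v) := by rw [add_pow]
    _ = p * q ^ v := by rw [hpq, one_pow, mul_one]

lemma perK {Ω : Type*} [MeasurableSpace Ω] (μ : Measure Ω) [IsProbabilityMeasure μ]
    {n v : ℕ} (hv1 : 1 ≤ v) (hvn : v ≤ n - 1)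
    (X : Fin n → Ω → ℕ) (hX : ∀ i, Measurable (X i))
    (hind : iIndepFun X μ)
    (k : ℕ) (pk : ℝ) (h0 : 0 ≤ pk) (h1 : pk ≤ 1)
    (hd : ∀ i, μ (X i ⁻¹' {k}) = ENNReal.ofReal pk) :
    Integrable (fun ω => Fst n v (∑ i, if X i ω = k then 1 else 0)) μ ∧
      ∫ ω, Fst n v (∑ i, if X i ω = k then 1 else 0) ∂μ = pk * (1 - pk) ^ v := by
  classical
  set N : Ω → ℕ := fun ω => ∑ i, if X i ω = k then 1 else 0 with hN
  set A : Finset (Fin n) → Set Ω :=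
    fun s => ⋂ i, (if i ∈ s then X i ⁻¹' {k} else (X i ⁻¹' {k})ᶜ) with hA
  have hAmeas : ∀ s, MeasurableSet (A s) := by
    intro s
    apply MeasurableSet.iInter
    intro i
    by_cases h : i ∈ s
    · simp only [h, if_true]; exact (hX i) (measurableSet_singleton k)
    · simp only [h, if_false]; exact ((hX i) (measurableSet_singleton k)).compl
  have hrep : (fun ω => Fst n v (N ω)) =
      fun ω => ∑ s : Finset (Fin n), (A s).indicator (fun _ => Fst n v s.card) ω := by
    funext ω
    have hmem : ω ∈ A (Finset.univ.filter (fun i => X i ω = k)) := by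
      simp only [hA, Set.mem_iInter]
      intro i
      by_cases h : X i ω = k
      · simp [h]
      · simp [h]
    rw [Finset.sum_eq_single (Finset.univ.filter (fun i => X i ω = k))]
    · rw [Set.indicator_of_mem hmem]
      congr 1
      exact (Finset.card_filter _ _).symm
    · intro s _ hs
      apply Set.indicator_of_notMem
      intro hωs
      apply hs
      ext i
      simp only [hA, Set.mem_iInter] at hωs
      have hi := hωs i
      simp only [Finset.mem_filter, Finset.mem_univ, true_and]
      by_cases h : i ∈ s
      · simp only [h, if_true, Set.mem_preimage, Set.mem_singleton_iff] at hi
        simp [h, hi]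
      · simp only [h, if_false, Set.mem_compl_iff, Set.mem_preimage,
          Set.mem_singleton_iff] at hi
        simp [h, hi]
    · intro h; exact absurd (Finset.mem_univ _) h
  have hmeasA : ∀ s : Finset (Fin n), μ (A s) =
      ENNReal.ofReal pk ^ s.card * ENNReal.ofReal (1 - pk) ^ (n - s.card) := by
    intro s
    have hmble : ∀ i : Fin n,
        MeasurableSet[(inferInstance : MeasurableSpace ℕ).comap (X i)]
          (if i ∈ s then X i ⁻¹' {k} else (X i ⁻¹' {k})ᶜ) := by
      intro i
      by_cases h : i ∈ s
      · simp only [h, if_true]; exact ⟨{k}, measurableSet_singleton k, rfl⟩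
      · simp only [h, if_false]; exact ⟨{k}ᶜ, (measurableSet_singleton k).compl, rfl⟩
    have hval : ∀ i : Fin n, μ (if i ∈ s then X i ⁻¹' {k} else (X i ⁻¹' {k})ᶜ)
        = if i ∈ s then ENNReal.ofReal pk else ENNReal.ofReal (1 - pk) := by
      intro i
      by_cases h : i ∈ s
      · simp only [h, if_true]; exact hd i
      · simp only [h, if_false]
        rw [prob_compl_eq_one_sub ((hX i) (measurableSet_singleton k)), hd i,
          ENNReal.ofReal_sub _ h0, ENNReal.ofReal_one]
    calc μ (A s) = ∏ i, μ (if i ∈ s then X i ⁻¹' {k} else (X i ⁻¹' {k})ᶜ) := by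
          rw [hA]; exact hind.meas_iInter hmble
      _ = ∏ i : Fin n, (if i ∈ s then ENNReal.ofReal pk else ENNReal.ofReal (1 - pk)) :=
          Finset.prod_congr rfl fun i _ => hval i
      _ = ENNReal.ofReal pk ^ s.card * ENNReal.ofReal (1 - pk) ^ (n - s.card) := by
          rw [Finset.prod_ite, Finset.prod_const, Finset.prod_const,
            Finset.filter_univ_mem, Finset.filter_not, Finset.filter_univ_mem,
            Finset.card_sdiff_of_subset (Finset.subset_univ s), Finset.card_univ, Fintype.card_fin]
  have hint : ∀ s : Finset (Fin n), Integrable ((A s).indicator fun _ => Fst n v s.card) μ :=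
    fun s => (integrable_const _).indicator (hAmeas s)
  refine ⟨by rw [hrep]; exact integrable_finset_sum _ (fun s _ => hint s), ?_⟩
  rw [hrep, integral_finset_sum _ (fun s _ => hint s)]
  have hterm : ∀ s : Finset (Fin n),
      ∫ ω, (A s).indicator (fun _ => Fst n v s.card) ω ∂μ
        = pk ^ s.card * (1 - pk) ^ (n - s.card) * Fst n v s.card := by
    intro s
    rw [integral_indicator_const _ (hAmeas s), measureReal_def, hmeasA s, smul_eq_mul]
    rw [ENNReal.toReal_mul, ENNReal.toReal_pow, ENNReal.toReal_pow,
      ENNReal.toReal_ofReal h0, ENNReal.toReal_ofReal (by linarith : (0:ℝ) ≤ 1 - pk)]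
  rw [Finset.sum_congr rfl fun s _ => hterm s]
  have hps := Finset.sum_powerset_apply_card
    (fun m => pk ^ m * (1 - pk) ^ (n - m) * Fst n v m) (x := (Finset.univ : Finset (Fin n)))
  rw [Finset.powerset_univ, Finset.card_univ, Fintype.card_fin] at hps
  rw [hps]
  rw [← sum_identity hv1 hvn pk (1 - pk) (by ring)]
  refine Finset.sum_congr rfl ?_
  intro m _
  rw [nsmul_eq_mul]
  ring

end ZZaux

/-- given i.i.d. samples `X_1,…,X_n` from a countable alphabet with
distribution `p`, counts `x_k = ∑_i 1[X_i = ℓ_k]` and `p̂_k = x_k / n`, the statistic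
`∑_k p̂_k ∏_{j=1}^v (1 - (x_k-1)/(n-j))` is an unbiased estimator of
`ζ_{1,v} = ∑_k p_k (1-p_k)^v` for every `1 ≤ v ≤ n-1`. -/
theorem zhang_zhou_estimator_unbiased
    {Ω : Type*} [MeasurableSpace Ω] (μ : Measure Ω) [IsProbabilityMeasure μ]
    (p : ℕ → ℝ) (hp : ∀ k, 0 ≤ p k) (hps : HasSum p 1)
    (n : ℕ) (X : Fin n → Ω → ℕ) (hX : ∀ i, Measurable (X i))
    (hind : iIndepFun X μ)
    (hdist : ∀ i k, μ (X i ⁻¹' {k}) = ENNReal.ofReal (p k))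
    (v : ℕ) (hv1 : 1 ≤ v) (hvn : v ≤ n - 1) :
    ∫ ω,
        (∑' k : ℕ,
          ((∑ i, if X i ω = k then 1 else 0 : ℕ) : ℝ) / n *
            ∏ j ∈ Finset.Icc 1 v,
              (1 - (((∑ i, if X i ω = k then 1 else 0 : ℕ) : ℝ) - 1) /
                ((n : ℝ) - (j : ℝ)))) ∂μ
      = ∑' k, p k * (1 - p k) ^ v := by
  classical
  have hn2 : 2 ≤ n := by omega
  have hp1 : ∀ k, p k ≤ 1 := fun k => le_hasSum hps k (fun j _ => hp j)
  have hper := fun k => ZZaux.perK μ hv1 hvn X hX hind k (p k) (hp k) (hp1 k)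
    (fun i => hdist i k)
  have hNmeas : ∀ k, Measurable (fun ω => (∑ i, if X i ω = k then 1 else 0 : ℕ)) := by
    intro k
    apply Finset.measurable_sum
    intro i _
    exact Measurable.comp (measurable_from_top (f := fun x : ℕ => if x = k then (1:ℕ) else 0))
      (hX i)
  have hmeas : ∀ k : ℕ, AEStronglyMeasurable
      (fun ω => ZZaux.Fst n v (∑ i, if X i ω = k then 1 else 0)) μ :=
    fun k => (Measurable.comp (measurable_from_top (f := fun m : ℕ => ZZaux.Fst n v m))
      (hNmeas k)).aestronglyMeasurable
  have hNle : ∀ (k : ℕ) (ω : Ω), (∑ i, if X i ω = k then 1 else 0 : ℕ) ≤ n := by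
    intro k ω
    calc (∑ i, if X i ω = k then 1 else 0 : ℕ) ≤ ∑ _i : Fin n, 1 :=
          Finset.sum_le_sum (fun i _ => by by_cases h : X i ω = k <;> simp [h])
      _ = n := by simp
  have hnn : ∀ (k : ℕ) (ω : Ω), 0 ≤ ZZaux.Fst n v (∑ i, if X i ω = k then 1 else 0) :=
    fun k ω => ZZaux.Fst_nonneg (hNle k ω) hvn
  have heq : ∀ k : ℕ,
      ∫⁻ ω, (‖ZZaux.Fst n v (∑ i, if X i ω = k then 1 else 0)‖₊ : ENNReal) ∂μ
        = ENNReal.ofReal (p k * (1 - p k) ^ v) := by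
    intro k
    calc ∫⁻ ω, (‖ZZaux.Fst n v (∑ i, if X i ω = k then 1 else 0)‖₊ : ENNReal) ∂μ
        = ∫⁻ ω, ENNReal.ofReal (ZZaux.Fst n v (∑ i, if X i ω = k then 1 else 0)) ∂μ := by
          apply lintegral_congr
          intro ω
          exact Real.enorm_eq_ofReal (hnn k ω)
      _ = ENNReal.ofReal (∫ ω, ZZaux.Fst n v (∑ i, if X i ω = k then 1 else 0) ∂μ) :=
          (ofReal_integral_eq_lintegral_ofReal (hper k).1
            (Filter.Eventually.of_forall (hnn k))).symm
      _ = ENNReal.ofReal (p k * (1 - p k) ^ v) := by rw [(hper k).2]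
  have hfin : (∑' k : ℕ,
      ∫⁻ ω, (‖ZZaux.Fst n v (∑ i, if X i ω = k then 1 else 0)‖₊ : ENNReal) ∂μ) ≠ ⊤ := by
    have hle : (∑' k : ℕ,
        ∫⁻ ω, (‖ZZaux.Fst n v (∑ i, if X i ω = k then 1 else 0)‖₊ : ENNReal) ∂μ)
          ≤ ENNReal.ofReal 1 := by
      calc (∑' k : ℕ, ∫⁻ ω, (‖ZZaux.Fst n v (∑ i, if X i ω = k then 1 else 0)‖₊ : ENNReal) ∂μ)
          = ∑' k : ℕ, ENNReal.ofReal (p k * (1 - p k) ^ v) := by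
            exact tsum_congr heq
        _ ≤ ∑' k : ℕ, ENNReal.ofReal (p k) := by
            refine ENNReal.tsum_le_tsum fun k => ENNReal.ofReal_le_ofReal ?_
            have h1 : (1 - p k) ^ v ≤ 1 :=
              pow_le_one₀ (by linarith [hp1 k]) (by linarith [hp k])
            nlinarith [hp k]
        _ = ENNReal.ofReal (∑' k, p k) := (ENNReal.ofReal_tsum_of_nonneg hp hps.summable).symm
        _ = ENNReal.ofReal 1 := by rw [hps.tsum_eq]
    exact (lt_of_le_of_lt hle ENNReal.ofReal_lt_top).ne
  have hrw : (fun ω : Ω => (∑' k : ℕ,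
      ((∑ i, if X i ω = k then 1 else 0 : ℕ) : ℝ) / n *
        ∏ j ∈ Finset.Icc 1 v,
          (1 - (((∑ i, if X i ω = k then 1 else 0 : ℕ) : ℝ) - 1) /
            ((n : ℝ) - (j : ℝ)))))
      = fun ω : Ω => ∑' k : ℕ, ZZaux.Fst n v (∑ i, if X i ω = k then 1 else 0) := rfl
  rw [hrw, integral_tsum hmeas hfin]
  exact tsum_congr fun k => (hper k).2
end

section
/- Let {w_v : v ≥ 1} be real weights with |w_v| ≤ M for all v. For p ∈ [0,1] and n ∈ ℕ define g_n(p) = p Σ_{v=1}^{⌊n(1-p)+1⌋} w_v Π_{j=1}^v (1 - (np - 1)/(n - j)) and g(p) = p Σ_{v=1}^∞ w_v (1-p)^v. Then for any 0 < c < d < 1, lim_{n→∞} sup_{p ∈ [c,d]} √n |g_n(p) - g(p)| = 0. -/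
open Filter Topology

/-- `g_n(p) = p ∑_{v=1}^{⌊n(1-p)+1⌋} w_v ∏_{j=1}^v (1 - (np-1)/(n-j))`. -/
noncomputable def gEst (w : ℕ → ℝ) (n : ℕ) (p : ℝ) : ℝ :=
  p * ∑ v ∈ Finset.Icc 1 ⌊(n : ℝ) * (1 - p) + 1⌋₊,
    w v * ∏ j ∈ Finset.Icc 1 v, (1 - ((n : ℝ) * p - 1) / ((n : ℝ) - (j : ℝ)))

/-- `g(p) = p ∑_{v=1}^∞ w_v (1-p)^v`. -/
noncomputable def gLim (w : ℕ → ℝ) (p : ℝ) : ℝ :=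
  p * ∑' v : ℕ, w (v + 1) * (1 - p) ^ (v + 1)

/-- The cutoff sequence `V n = ⌈n^{1/8}⌉`. -/
noncomputable def vCut (n : ℕ) : ℕ := ⌈(n : ℝ) ^ ((1:ℝ)/8)⌉₊

/-- Telescoping estimate: a product of factors in `[0,1]`, each within `ε` of `b ∈ [0,1]`,
is within `v·ε` of `b^v`. -/
lemma abs_prod_sub_pow_le_s14 {a : ℕ → ℝ} {b : ℝ} (hb0 : 0 ≤ b) (hb1 : b ≤ 1) {ε : ℝ}
    (v : ℕ) (ha : ∀ j ∈ Finset.Icc 1 v, 0 ≤ a j ∧ a j ≤ 1)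
    (hε : ∀ j ∈ Finset.Icc 1 v, |a j - b| ≤ ε) :
    |(∏ j ∈ Finset.Icc 1 v, a j) - b ^ v| ≤ (v : ℝ) * ε := by
  induction v with
  | zero => simp
  | succ v ih =>
    have hsub : Finset.Icc 1 v ⊆ Finset.Icc 1 (v+1) :=
      Finset.Icc_subset_Icc_right (by omega)
    have ha' := fun j hj => ha j (hsub hj)
    have hε' := fun j hj => hε j (hsub hj)
    have hmem : v + 1 ∈ Finset.Icc 1 (v+1) := by simp
    have hP0 : 0 ≤ ∏ j ∈ Finset.Icc 1 v, a j :=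
      Finset.prod_nonneg fun j hj => (ha' j hj).1
    have hP1 : (∏ j ∈ Finset.Icc 1 v, a j) ≤ 1 :=
      Finset.prod_le_one (fun j hj => (ha' j hj).1) (fun j hj => (ha' j hj).2)
    have hrec := ih ha' hε'
    have h1 : |a (v+1) - b| ≤ ε := hε _ hmem
    rw [Finset.prod_Icc_succ_top (by omega : 1 ≤ v + 1)]
    set P := ∏ j ∈ Finset.Icc 1 v, a j with hP
    have hbv0 : (0:ℝ) ≤ b ^ v := pow_nonneg hb0 v
    calc |P * a (v+1) - b ^ (v+1)|
        = |P * (a (v+1) - b) + b * (P - b ^ v)| := by ring_nf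
      _ ≤ |P * (a (v+1) - b)| + |b * (P - b ^ v)| := abs_add_le _ _
      _ = P * |a (v+1) - b| + b * |P - b ^ v| := by
          rw [abs_mul, abs_mul, abs_of_nonneg hP0, abs_of_nonneg hb0]
      _ ≤ ((v:ℕ) + 1 : ℝ) * ε := by
          have h2 := abs_nonneg (a (v+1) - b)
          have h3 := abs_nonneg (P - b ^ v)
          nlinarith [hrec]
      _ = ((v + 1 : ℕ) : ℝ) * ε := by push_cast; ring
  

/-- The factors appearing in `gEst`. -/
noncomputable def aFac (n : ℕ) (p : ℝ) (j : ℕ) : ℝ :=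
  1 - ((n : ℝ) * p - 1) / ((n : ℝ) - (j : ℝ))

/-- Partial products of the factors. -/
noncomputable def pProd (n : ℕ) (p : ℝ) (v : ℕ) : ℝ :=
  ∏ j ∈ Finset.Icc 1 v, aFac n p j

lemma aFac_sub (n : ℕ) (p : ℝ) (j : ℕ) (h : (n:ℝ) - (j:ℝ) ≠ 0) :
    aFac n p j - (1 - p) = (1 - p * j) / ((n:ℝ) - j) := by
  unfold aFac
  field_simp
  ring

set_option maxHeartbeats 2000000 in
/-- Key uniform estimate: eventually in `n`, for all `p ∈ [c,d]`,
`|g_n(p) - g(p)|` is bounded by an explicit quantity. -/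
lemma key_bound (w : ℕ → ℝ) (M : ℝ) (hM : 0 < M) (hw : ∀ v, 1 ≤ v → |w v| ≤ M)
    (c d : ℝ) (hc : 0 < c) (hcd : c < d) (hd : d < 1) :
    ∀ᶠ n : ℕ in atTop, ∀ p ∈ Set.Icc c d,
      |gEst w n p - gLim w p| ≤
        2 * M * (vCut n : ℝ) ^ 3 / ((n : ℝ) - vCut n)
          + ((n : ℝ) * M + M / c) * (1 - c/2) ^ (vCut n) := by
  have hc1 : c < 1 := hcd.trans hd
  -- eventual smallness of vCut
  have hVub : ∀ n : ℕ, (vCut n : ℝ) ≤ (n : ℝ) ^ ((1:ℝ)/8) + 1 := by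
    intro n
    exact (Nat.ceil_lt_add_one (Real.rpow_nonneg (Nat.cast_nonneg n) _)).le
  have hVn : Tendsto (fun n : ℕ => (vCut n : ℝ) / n) atTop (𝓝 0) := by
    have hup : Tendsto (fun n : ℕ => (n:ℝ) ^ (-(7:ℝ)/8) + 1 / n) atTop (𝓝 0) := by
      have h1 : Tendsto (fun n : ℕ => (n:ℝ) ^ (-(7:ℝ)/8)) atTop (𝓝 0) := by
        have := (tendsto_rpow_neg_atTop (by norm_num : (0:ℝ) < 7/8)).comp
          (tendsto_natCast_atTop_atTop (R := ℝ))
        simpa [Function.comp_def, neg_div] using this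
      simpa using h1.add tendsto_one_div_atTop_nhds_zero_nat
    apply squeeze_zero' (Eventually.of_forall fun n =>
      div_nonneg (Nat.cast_nonneg _) (Nat.cast_nonneg _)) _ hup
    filter_upwards [eventually_ge_atTop 1] with n hn
    have hn0 : (0:ℝ) < n := by exact_mod_cast hn
    have hle : (vCut n : ℝ) / n ≤ ((n:ℝ) ^ ((1:ℝ)/8) + 1) / n := by
      gcongr
      exact hVub n
    refine hle.trans (le_of_eq ?_)
    rw [add_div, one_div]
    congr 1
    rw [div_eq_mul_inv, ← Real.rpow_neg_one (n:ℝ), ← Real.rpow_add hn0]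
    norm_num
  have eA : ∀ᶠ n : ℕ in atTop, (vCut n : ℝ) ≤ (1 - d) * n := by
    filter_upwards [hVn.eventually_le_const (by linarith : (0:ℝ) < 1 - d),
      eventually_ge_atTop 1] with n h1 h2
    have hn0 : (0:ℝ) < n := by exact_mod_cast h2
    calc (vCut n : ℝ) = (vCut n : ℝ) / n * n := by field_simp
      _ ≤ (1 - d) * n := mul_le_mul_of_nonneg_right h1 hn0.le
  have eB : ∀ᶠ n : ℕ in atTop, (vCut n : ℝ) ≤ (n:ℝ) / 2 := by
    filter_upwards [hVn.eventually_le_const (by norm_num : (0:ℝ) < 1/2),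
      eventually_ge_atTop 1] with n h1 h2
    have hn0 : (0:ℝ) < n := by exact_mod_cast h2
    calc (vCut n : ℝ) = (vCut n : ℝ) / n * n := by field_simp
      _ ≤ 1/2 * n := mul_le_mul_of_nonneg_right h1 hn0.le
      _ = (n:ℝ)/2 := by ring
  have eC : ∀ᶠ n : ℕ in atTop, 8 / c ≤ (n : ℝ) :=
    tendsto_natCast_atTop_atTop.eventually_ge_atTop (8 / c)
  filter_upwards [eA, eB, eC, eventually_ge_atTop 1] with n hVd hVhalf hcn hn1
  intro p hp
  obtain ⟨hpc, hpd⟩ := hp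
  set V : ℕ := vCut n with hVdef
  set q : ℝ := 1 - p with hqdef
  set r : ℝ := 1 - c/2 with hrdef
  have hp0 : 0 < p := lt_of_lt_of_le hc hpc
  have hp1 : p < 1 := lt_of_le_of_lt hpd hd
  have hq0 : 0 < q := by rw [hqdef]; linarith
  have hq1 : q < 1 := by rw [hqdef]; linarith
  have hq2 : q ≤ 1 - c := by rw [hqdef]; linarith
  have hr0 : 0 < r := by rw [hrdef]; linarith
  have hr1 : r < 1 := by rw [hrdef]; linarith
  have hqr : q ≤ r := by rw [hqdef, hrdef]; linarith
  have hn0 : (0:ℝ) < n := by exact_mod_cast hn1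
  have hnc : 8 ≤ (n:ℝ) * c := by
    have h := mul_le_mul_of_nonneg_right hcn hc.le
    rw [div_mul_cancel₀ _ hc.ne'] at h
    linarith
  have hnV : (n:ℝ)/2 ≤ (n:ℝ) - V := by linarith
  have hnV2 : 2 / c ≤ (n:ℝ) - V := by
    have h8 : 8/c = 2*(4/c) := by ring
    have h4 : (4:ℝ)/c = 2*(2/c) := by ring
    have hpos : (0:ℝ) ≤ 2/c := by positivity
    linarith
  have hnVpos : (0:ℝ) < (n:ℝ) - V := lt_of_lt_of_le (div_pos two_pos hc) hnV2
  have hnp : 8 ≤ (n:ℝ) * p := le_trans hnc (by nlinarith)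
  set N : ℕ := ⌊(n:ℝ) * q + 1⌋₊ with hNdef
  have hNq : (N:ℝ) ≤ (n:ℝ) * q + 1 := Nat.floor_le (by positivity)
  have hqn3 : (n:ℝ) * q + 1 ≤ (n:ℝ) - 3 := by nlinarith
  have hNn3 : (N:ℝ) ≤ (n:ℝ) - 3 := hNq.trans hqn3
  have hVN : V ≤ N := by
    apply Nat.le_floor
    have h := hVd
    nlinarith
  have hNn : N ≤ n := by
    have h : (N:ℝ) ≤ (n:ℝ) := by linarith
    exact_mod_cast h
  have hV1 : 1 ≤ V := by
    have h18 : (1:ℝ) ≤ (n:ℝ) ^ ((1:ℝ)/8) :=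
      calc (1:ℝ) = (1:ℝ) ^ ((1:ℝ)/8) := (Real.one_rpow _).symm
        _ ≤ (n:ℝ) ^ ((1:ℝ)/8) :=
            Real.rpow_le_rpow zero_le_one (by exact_mod_cast hn1) (by norm_num)
    have h2 : (1:ℝ) ≤ (⌈(n : ℝ) ^ ((1:ℝ)/8)⌉₊ : ℝ) := h18.trans (Nat.le_ceil _)
    have h3 : 1 ≤ ⌈(n : ℝ) ^ ((1:ℝ)/8)⌉₊ := by exact_mod_cast h2
    rw [hVdef, vCut]
    exact h3
  -- the factors
  have hden : ∀ j : ℕ, j ∈ Finset.Icc 1 N → (0:ℝ) < (n:ℝ) - j := by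
    intro j hj
    rw [Finset.mem_Icc] at hj
    have h : (j:ℝ) ≤ N := by exact_mod_cast hj.2
    linarith
  have ha01 : ∀ j ∈ Finset.Icc 1 N, 0 ≤ aFac n p j ∧ aFac n p j ≤ 1 := by
    intro j hj
    have hd0 := hden j hj
    rw [Finset.mem_Icc] at hj
    have hjN : (j:ℝ) ≤ N := by exact_mod_cast hj.2
    constructor
    · have h1 : ((n:ℝ) * p - 1) / ((n:ℝ) - j) ≤ 1 := by
        rw [div_le_one hd0]
        have h2 : (j:ℝ) ≤ (n:ℝ) * q + 1 := hjN.trans hNq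
        rw [hqdef] at h2
        nlinarith
      unfold aFac
      linarith
    · have h1 : 0 ≤ ((n:ℝ) * p - 1) / ((n:ℝ) - j) :=
        div_nonneg (by linarith) hd0.le
      unfold aFac
      linarith
  have haq : ∀ j ∈ Finset.Icc 1 N, aFac n p j - q = (1 - p * j) / ((n:ℝ) - j) := by
    intro j hj
    rw [hqdef]
    exact aFac_sub n p j (hden j hj).ne'
  have hVsub : Finset.Icc 1 V ⊆ Finset.Icc 1 N := Finset.Icc_subset_Icc_right hVN
  set ε : ℝ := (1 + (V:ℝ)) / ((n:ℝ) - V) with hεdef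
  have hε0 : 0 ≤ ε := div_nonneg (by positivity) hnVpos.le
  have hεj : ∀ j ∈ Finset.Icc 1 V, |aFac n p j - q| ≤ ε := by
    intro j hj
    have hjN := hVsub hj
    have hd0 := hden j hjN
    rw [Finset.mem_Icc] at hj
    have hjV : (j:ℝ) ≤ V := by exact_mod_cast hj.2
    rw [haq j hjN, abs_div, abs_of_pos hd0, hεdef]
    have hpj : 0 ≤ p * j := mul_nonneg hp0.le (Nat.cast_nonneg _)
    have hpj2 : p * j ≤ (j:ℝ) := by nlinarith [Nat.cast_nonneg (α := ℝ) j]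
    have hnum : |1 - p * (j:ℝ)| ≤ 1 + (V:ℝ) := by
      rw [abs_le]
      constructor <;> nlinarith
    exact div_le_div₀ (by positivity) hnum hnVpos (by linarith)
  have har : ∀ j ∈ Finset.Icc 1 V, aFac n p j ≤ r := by
    intro j hj
    have hjN := hVsub hj
    have hd0 := hden j hjN
    rw [Finset.mem_Icc] at hj
    have hjV : (j:ℝ) ≤ V := by exact_mod_cast hj.2
    have heq := haq j hjN
    have hpj : 0 ≤ p * j := mul_nonneg hp0.le (Nat.cast_nonneg _)
    have h1 : (1 - p * j) / ((n:ℝ) - j) ≤ 1 / ((n:ℝ) - j) := by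
      gcongr
      linarith
    have h2 : 1 / ((n:ℝ) - j) ≤ 1 / ((n:ℝ) - V) := by
      gcongr
    have h3 : 1 / ((n:ℝ) - V) ≤ c / 2 := by
      rw [div_le_div_iff₀ hnVpos two_pos]
      rw [div_le_iff₀ hc] at hnV2
      nlinarith
    rw [hrdef]
    have h4 : aFac n p j - q ≤ c/2 := by rw [heq]; linarith
    linarith
  -- products
  have hIoc : ∀ m : ℕ, Finset.Icc 1 m = Finset.Ioc 0 m := by
    intro m; ext x; simp [Finset.mem_Icc, Finset.mem_Ioc, Nat.lt_iff_add_one_le]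
  have hPbd : ∀ v ∈ Finset.Icc 1 V, |pProd n p v - q ^ v| ≤ (V:ℝ) * ε := by
    intro v hv
    rw [Finset.mem_Icc] at hv
    have hsub2 : Finset.Icc 1 v ⊆ Finset.Icc 1 V := Finset.Icc_subset_Icc_right hv.2
    have h := abs_prod_sub_pow_le_s14 hq0.le hq1.le v
      (fun j hj => ha01 j (hVsub (hsub2 hj))) (fun j hj => hεj j (hsub2 hj))
    refine h.trans ?_
    have hvV : (v:ℝ) ≤ V := by exact_mod_cast hv.2
    nlinarith
  have hPV : pProd n p V ≤ r ^ V := by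
    have h1 : pProd n p V ≤ ∏ _j ∈ Finset.Icc 1 V, r :=
      Finset.prod_le_prod (fun j hj => (ha01 j (hVsub hj)).1) har
    rwa [Finset.prod_const, Nat.card_Icc, Nat.add_sub_cancel] at h1
  have hPtail : ∀ v ∈ Finset.Ioc V N, 0 ≤ pProd n p v ∧ pProd n p v ≤ r ^ V := by
    intro v hv
    rw [Finset.mem_Ioc] at hv
    have hsub3 : Finset.Icc 1 v ⊆ Finset.Icc 1 N := Finset.Icc_subset_Icc_right hv.2
    have hP0 : 0 ≤ pProd n p v := Finset.prod_nonneg fun j hj => (ha01 j (hsub3 hj)).1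
    refine ⟨hP0, ?_⟩
    have hmem : ∀ j ∈ Finset.Ioc V v, j ∈ Finset.Icc 1 N := by
      intro j hj
      rw [Finset.mem_Ioc] at hj
      exact Finset.mem_Icc.mpr ⟨by omega, hj.2.trans hv.2⟩
    have hsplit : pProd n p V * ∏ j ∈ Finset.Ioc V v, aFac n p j = pProd n p v := by
      unfold pProd
      rw [hIoc V, hIoc v]
      exact Finset.prod_Ioc_consecutive _ (Nat.zero_le V) hv.1.le
    have hT1 : (∏ j ∈ Finset.Ioc V v, aFac n p j) ≤ 1 :=
      Finset.prod_le_one (fun j hj => (ha01 j (hmem j hj)).1)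
        (fun j hj => (ha01 j (hmem j hj)).2)
    have hPV0 : 0 ≤ pProd n p V := Finset.prod_nonneg fun j hj => (ha01 j (hVsub hj)).1
    calc pProd n p v = pProd n p V * ∏ j ∈ Finset.Ioc V v, aFac n p j := hsplit.symm
      _ ≤ pProd n p V * 1 := mul_le_mul_of_nonneg_left hT1 hPV0
      _ = pProd n p V := mul_one _
      _ ≤ r ^ V := hPV
  -- summability
  have hfb : ∀ v : ℕ, ‖w (v + 1) * q ^ (v + 1)‖ ≤ M * q * q ^ v := by
    intro v
    rw [norm_mul, Real.norm_eq_abs, Real.norm_eq_abs,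
      abs_of_nonneg (pow_nonneg hq0.le _)]
    calc |w (v+1)| * q ^ (v + 1) ≤ M * q ^ (v + 1) := by
          apply mul_le_mul_of_nonneg_right (hw (v+1) (by omega))
          positivity
      _ = M * q * q ^ v := by rw [pow_succ]; ring
  have hsum : Summable (fun v : ℕ => w (v + 1) * q ^ (v + 1)) :=
    Summable.of_norm_bounded
      ((summable_geometric_of_lt_one hq0.le hq1).mul_left (M * q)) hfb
  -- decomposition
  have hsplit_tsum : (∑ i ∈ Finset.range V, w (i + 1) * q ^ (i + 1))
      + (∑' v : ℕ, w (v + V + 1) * q ^ (v + V + 1))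
      = ∑' v : ℕ, w (v + 1) * q ^ (v + 1) := by
    have h := hsum.sum_add_tsum_nat_add V
    simpa using h
  have hrange : (∑ i ∈ Finset.range V, w (i + 1) * q ^ (i + 1))
      = ∑ v ∈ Finset.Icc 1 V, w v * q ^ v := by
    have hIco : Finset.Icc 1 V = Finset.Ico 1 (V + 1) := by
      ext x; simp [Finset.mem_Icc, Finset.mem_Ico]
    rw [hIco, Finset.sum_Ico_eq_sum_range]
    simp only [Nat.add_sub_cancel]
    apply Finset.sum_congr rfl
    intro i _
    rw [add_comm 1 i]
  have hgEst : gEst w n p = p * ((∑ v ∈ Finset.Icc 1 V, w v * pProd n p v)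
      + ∑ v ∈ Finset.Ioc V N, w v * pProd n p v) := by
    have h0 : gEst w n p = p * ∑ v ∈ Finset.Icc 1 N, w v * pProd n p v := rfl
    rw [h0]
    congr 1
    rw [hIoc N, ← Finset.sum_Ioc_consecutive _ (Nat.zero_le V) hVN, ← hIoc V]
  have hgLim : gLim w p = p * ((∑ v ∈ Finset.Icc 1 V, w v * q ^ v)
      + ∑' v : ℕ, w (v + V + 1) * q ^ (v + V + 1)) := by
    have h0 : gLim w p = p * ∑' v : ℕ, w (v + 1) * q ^ (v + 1) := rfl
    rw [h0, ← hsplit_tsum, hrange]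
  -- tail tsum bound
  have htail : |∑' v : ℕ, w (v + V + 1) * q ^ (v + V + 1)| ≤ M / c * r ^ V := by
    have hgs : HasSum (fun v : ℕ => M * q ^ (V + 1) * q ^ v) (M * q ^ (V + 1) * (1 - q)⁻¹) :=
      (hasSum_geometric_of_lt_one hq0.le hq1).mul_left _
    have hb : ∀ v : ℕ, ‖w (v + V + 1) * q ^ (v + V + 1)‖ ≤ M * q ^ (V + 1) * q ^ v := by
      intro v
      rw [norm_mul, Real.norm_eq_abs, Real.norm_eq_abs,
        abs_of_nonneg (pow_nonneg hq0.le _)]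
      calc |w (v + V + 1)| * q ^ (v + V + 1) ≤ M * q ^ (v + V + 1) := by
            apply mul_le_mul_of_nonneg_right (hw _ (by omega))
            positivity
        _ = M * q ^ (V + 1) * q ^ v := by
            rw [show v + V + 1 = (V + 1) + v by omega, pow_add]; ring
    have h := tsum_of_norm_bounded hgs hb
    rw [Real.norm_eq_abs] at h
    refine h.trans ?_
    have hq_pow : q ^ (V + 1) ≤ r ^ V := by
      calc q ^ (V + 1) ≤ q ^ V := by
            apply pow_le_pow_of_le_one hq0.le hq1.le
            omega
        _ ≤ r ^ V := pow_le_pow_left₀ hq0.le hqr V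
    have hinv : (1 - q)⁻¹ ≤ c⁻¹ := by
      rw [hqdef, sub_sub_cancel]
      exact inv_anti₀ hc hpc
    calc M * q ^ (V + 1) * (1 - q)⁻¹ ≤ M * r ^ V * c⁻¹ := by
          apply mul_le_mul ?_ hinv
            (by rw [hqdef, sub_sub_cancel]; exact inv_nonneg.mpr hp0.le) (by positivity)
          exact mul_le_mul_of_nonneg_left hq_pow hM.le
      _ = M / c * r ^ V := by ring
  -- head bound
  have hhead : |(∑ v ∈ Finset.Icc 1 V, w v * pProd n p v)
        - ∑ v ∈ Finset.Icc 1 V, w v * q ^ v|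
      ≤ 2 * M * (V:ℝ) ^ 3 / ((n:ℝ) - V) := by
    rw [← Finset.sum_sub_distrib]
    calc |∑ v ∈ Finset.Icc 1 V, (w v * pProd n p v - w v * q ^ v)|
        ≤ ∑ v ∈ Finset.Icc 1 V, |w v * pProd n p v - w v * q ^ v| :=
          Finset.abs_sum_le_sum_abs _ _
      _ ≤ ∑ v ∈ Finset.Icc 1 V, M * ((V:ℝ) * ε) := by
          apply Finset.sum_le_sum
          intro v hv
          rw [← mul_sub, abs_mul]
          exact mul_le_mul (hw v (Finset.mem_Icc.mp hv).1) (hPbd v hv)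
            (abs_nonneg _) hM.le
      _ = (V:ℝ) * (M * ((V:ℝ) * ε)) := by
          rw [Finset.sum_const, Nat.card_Icc, Nat.add_sub_cancel, nsmul_eq_mul]
      _ ≤ 2 * M * (V:ℝ) ^ 3 / ((n:ℝ) - V) := by
          have hV1' : (1:ℝ) ≤ V := by exact_mod_cast hV1
          have heq : (V:ℝ) * (M * ((V:ℝ) * ε))
              = M * (V:ℝ)^2 * (1 + (V:ℝ)) / ((n:ℝ) - V) := by
            rw [hεdef]
            field_simp
          have hnum2 : M * (V:ℝ)^2 * (1 + (V:ℝ)) ≤ 2 * M * (V:ℝ)^3 := by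
            nlinarith [mul_nonneg (mul_nonneg hM.le (sq_nonneg (V:ℝ)))
              (by linarith : (0:ℝ) ≤ (V:ℝ) - 1)]
          rw [heq, div_le_div_iff₀ hnVpos hnVpos]
          nlinarith [mul_nonneg
            (by linarith : (0:ℝ) ≤ 2 * M * (V:ℝ)^3 - M * (V:ℝ)^2 * (1 + (V:ℝ)))
            hnVpos.le]
  -- tail sum bound
  have htailsum : |∑ v ∈ Finset.Ioc V N, w v * pProd n p v| ≤ (n:ℝ) * M * r ^ V := by
    calc |∑ v ∈ Finset.Ioc V N, w v * pProd n p v|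
        ≤ ∑ v ∈ Finset.Ioc V N, |w v * pProd n p v| := Finset.abs_sum_le_sum_abs _ _
      _ ≤ ∑ v ∈ Finset.Ioc V N, M * r ^ V := by
          apply Finset.sum_le_sum
          intro v hv
          have hv' := Finset.mem_Ioc.mp hv
          rw [abs_mul]
          apply mul_le_mul (hw v (by omega)) ?_ (abs_nonneg _) hM.le
          rw [abs_of_nonneg (hPtail v hv).1]
          exact (hPtail v hv).2
      _ = ((N - V : ℕ) : ℝ) * (M * r ^ V) := by
          rw [Finset.sum_const, Nat.card_Ioc, nsmul_eq_mul]
      _ ≤ (n:ℝ) * M * r ^ V := by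
          have h1 : ((N - V : ℕ) : ℝ) ≤ (n:ℝ) := by
            have h2 : N - V ≤ n := by omega
            exact_mod_cast h2
          have h2 : (0:ℝ) ≤ M * r ^ V := by positivity
          nlinarith
  -- combine
  have hdiff : gEst w n p - gLim w p
      = p * (((∑ v ∈ Finset.Icc 1 V, w v * pProd n p v)
          - ∑ v ∈ Finset.Icc 1 V, w v * q ^ v)
        + (∑ v ∈ Finset.Ioc V N, w v * pProd n p v)
        - ∑' v : ℕ, w (v + V + 1) * q ^ (v + V + 1)) := by
    rw [hgEst, hgLim]; ring
  rw [hdiff, abs_mul, abs_of_pos hp0]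
  have habs : |((∑ v ∈ Finset.Icc 1 V, w v * pProd n p v)
          - ∑ v ∈ Finset.Icc 1 V, w v * q ^ v)
        + (∑ v ∈ Finset.Ioc V N, w v * pProd n p v)
        - ∑' v : ℕ, w (v + V + 1) * q ^ (v + V + 1)|
      ≤ 2 * M * (V:ℝ) ^ 3 / ((n:ℝ) - V) + ((n:ℝ) * M + M / c) * r ^ V := by
    refine le_trans (abs_sub _ _) ?_
    refine le_trans (add_le_add_left (abs_add_le _ _) _) ?_
    have := add_le_add (add_le_add hhead htailsum) htail
    refine this.trans (le_of_eq ?_)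
    ring
  have hmono := mul_le_mul_of_nonneg_right hp1.le (abs_nonneg
    (((∑ v ∈ Finset.Icc 1 V, w v * pProd n p v)
          - ∑ v ∈ Finset.Icc 1 V, w v * q ^ v)
        + (∑ v ∈ Finset.Ioc V N, w v * pProd n p v)
        - ∑' v : ℕ, w (v + V + 1) * q ^ (v + V + 1)))
  rw [one_mul] at hmono
  exact hmono.trans habs


lemma vCut_ub' (n : ℕ) : (vCut n : ℝ) ≤ (n : ℝ) ^ ((1:ℝ)/8) + 1 :=
  (Nat.ceil_lt_add_one (Real.rpow_nonneg (Nat.cast_nonneg n) _)).le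

lemma vCut_lb' (n : ℕ) : (n : ℝ) ^ ((1:ℝ)/8) ≤ (vCut n : ℝ) := Nat.le_ceil _

set_option maxHeartbeats 1000000 in
/-- for bounded weights and any `0 < c < d < 1`,
`lim_{n→∞} sup_{p∈[c,d]} √n |g_n(p) - g(p)| = 0`. -/
theorem sqrt_n_sup_dist_gEst_gLim_tendsto_zero
    (w : ℕ → ℝ) (M : ℝ) (hM : 0 < M) (hw : ∀ v, 1 ≤ v → |w v| ≤ M)
    (c d : ℝ) (hc : 0 < c) (hcd : c < d) (hd : d < 1) :
    Tendsto
      (fun n : ℕ => ⨆ p : Set.Icc c d, Real.sqrt n * |gEst w n p - gLim w p|)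
      atTop (𝓝 0) := by
  have hc1 : c < 1 := hcd.trans hd
  have hr0 : (0:ℝ) < 1 - c/2 := by linarith
  have hr1 : 1 - c/2 < 1 := by linarith
  have hkey := key_bound w M hM hw c d hc hcd hd
  -- eventual facts about n
  have e18 : ∀ᶠ n : ℕ in atTop, (1:ℝ) ≤ (n:ℝ) ^ ((1:ℝ)/8) := by
    filter_upwards [eventually_ge_atTop 1] with n hn
    calc (1:ℝ) = (1:ℝ) ^ ((1:ℝ)/8) := (Real.one_rpow _).symm
      _ ≤ (n:ℝ) ^ ((1:ℝ)/8) :=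
          Real.rpow_le_rpow zero_le_one (by exact_mod_cast hn) (by norm_num)
  have eB : ∀ᶠ n : ℕ in atTop, (vCut n : ℝ) ≤ (n:ℝ) / 2 := by
    have hVn : Tendsto (fun n : ℕ => (vCut n : ℝ) / n) atTop (𝓝 0) := by
      have hup : Tendsto (fun n : ℕ => (n:ℝ) ^ (-(7:ℝ)/8) + 1 / n) atTop (𝓝 0) := by
        have h1 : Tendsto (fun n : ℕ => (n:ℝ) ^ (-(7:ℝ)/8)) atTop (𝓝 0) := by
          have := (tendsto_rpow_neg_atTop (by norm_num : (0:ℝ) < 7/8)).comp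
            (tendsto_natCast_atTop_atTop (R := ℝ))
          simpa [Function.comp_def, neg_div] using this
        simpa using h1.add tendsto_one_div_atTop_nhds_zero_nat
      apply squeeze_zero' (Eventually.of_forall fun n =>
        div_nonneg (Nat.cast_nonneg _) (Nat.cast_nonneg _)) _ hup
      filter_upwards [eventually_ge_atTop 1] with n hn
      have hn0 : (0:ℝ) < n := by exact_mod_cast hn
      have hle : (vCut n : ℝ) / n ≤ ((n:ℝ) ^ ((1:ℝ)/8) + 1) / n := by
        gcongr
        exact vCut_ub' n
      refine hle.trans (le_of_eq ?_)
      rw [add_div, one_div]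
      congr 1
      rw [div_eq_mul_inv, ← Real.rpow_neg_one (n:ℝ), ← Real.rpow_add hn0]
      norm_num
    filter_upwards [hVn.eventually_le_const (by norm_num : (0:ℝ) < 1/2),
      eventually_ge_atTop 1] with n h1 h2
    have hn0 : (0:ℝ) < n := by exact_mod_cast h2
    calc (vCut n : ℝ) = (vCut n : ℝ) / n * n := by field_simp
      _ ≤ 1/2 * n := mul_le_mul_of_nonneg_right h1 hn0.le
      _ = (n:ℝ)/2 := by ring
  -- first piece tends to zero
  have hF1 : Tendsto (fun n : ℕ =>
      Real.sqrt n * (2 * M * (vCut n : ℝ) ^ 3 / ((n:ℝ) - vCut n))) atTop (𝓝 0) := by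
    have hG : Tendsto (fun n : ℕ => 32 * M * (n:ℝ) ^ (-(1:ℝ)/8)) atTop (𝓝 0) := by
      have h1 : Tendsto (fun n : ℕ => (n:ℝ) ^ (-(1:ℝ)/8)) atTop (𝓝 0) := by
        have := (tendsto_rpow_neg_atTop (by norm_num : (0:ℝ) < 1/8)).comp
          (tendsto_natCast_atTop_atTop (R := ℝ))
        simpa [Function.comp_def, neg_div] using this
      simpa using h1.const_mul (32 * M)
    apply squeeze_zero' ?_ ?_ hG
    · filter_upwards [eB, eventually_ge_atTop 1] with n hB hn
      have hn0 : (0:ℝ) < n := by exact_mod_cast hn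
      have : (0:ℝ) < (n:ℝ) - vCut n := by linarith
      positivity
    · filter_upwards [eB, e18, eventually_ge_atTop 1] with n hB h18 hn
      have hn0 : (0:ℝ) < n := by exact_mod_cast hn
      have hnV : (0:ℝ) < (n:ℝ) - vCut n := by linarith
      have hV2x : (vCut n : ℝ) ≤ 2 * (n:ℝ) ^ ((1:ℝ)/8) := by
        have := vCut_ub' n
        linarith
      have hx0 : (0:ℝ) ≤ (n:ℝ) ^ ((1:ℝ)/8) := Real.rpow_nonneg hn0.le _
      have h1 : 2 * M * (vCut n : ℝ) ^ 3 / ((n:ℝ) - vCut n)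
          ≤ 2 * M * (2 * (n:ℝ) ^ ((1:ℝ)/8)) ^ 3 / ((n:ℝ)/2) := by
        apply div_le_div₀ (by positivity) ?_ (by positivity) (by linarith)
        gcongr
      have h2 : Real.sqrt n * (2 * M * (vCut n : ℝ) ^ 3 / ((n:ℝ) - vCut n))
          ≤ Real.sqrt n * (2 * M * (2 * (n:ℝ) ^ ((1:ℝ)/8)) ^ 3 / ((n:ℝ)/2)) :=
        mul_le_mul_of_nonneg_left h1 (Real.sqrt_nonneg _)
      refine h2.trans (le_of_eq ?_)
      have hx3 : ((n:ℝ) ^ ((1:ℝ)/8)) ^ (3:ℕ) = (n:ℝ) ^ ((3:ℝ)/8) := by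
        rw [← Real.rpow_natCast ((n:ℝ) ^ ((1:ℝ)/8)) 3, ← Real.rpow_mul hn0.le]
        norm_num
      have hkey2 : (n:ℝ) ^ ((1:ℝ)/2) * (n:ℝ) ^ ((3:ℝ)/8) / (n:ℝ)
          = (n:ℝ) ^ (-(1:ℝ)/8) := by
        rw [div_eq_mul_inv, ← Real.rpow_neg_one (n:ℝ), ← Real.rpow_add hn0,
          ← Real.rpow_add hn0]
        norm_num
      calc Real.sqrt n * (2 * M * (2 * (n:ℝ) ^ ((1:ℝ)/8)) ^ 3 / ((n:ℝ)/2))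
          = 32 * M * ((n:ℝ) ^ ((1:ℝ)/2) * (n:ℝ) ^ ((3:ℝ)/8) / (n:ℝ)) := by
            rw [Real.sqrt_eq_rpow, mul_pow, hx3]
            field_simp
            ring
        _ = 32 * M * (n:ℝ) ^ (-(1:ℝ)/8) := by rw [hkey2]
  -- second piece tends to zero
  have hF2 : Tendsto (fun n : ℕ =>
      Real.sqrt n * (((n:ℝ) * M + M / c) * (1 - c/2) ^ (vCut n))) atTop (𝓝 0) := by
    set b : ℝ := -Real.log (1 - c/2) with hbdef
    have hb0 : 0 < b := by
      rw [hbdef, neg_pos]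
      exact Real.log_neg hr0 hr1
    have hφ : Tendsto (fun x : ℝ => x ^ (12:ℝ) * Real.exp (-b * x)) atTop (𝓝 0) :=
      tendsto_rpow_mul_exp_neg_mul_atTop_nhds_zero 12 b hb0
    have hcomp : Tendsto (fun n : ℕ =>
        ((n:ℝ) ^ ((1:ℝ)/8)) ^ (12:ℝ)
          * Real.exp (-b * (n:ℝ) ^ ((1:ℝ)/8))) atTop (𝓝 0) :=
      hφ.comp ((tendsto_rpow_atTop (by norm_num : (0:ℝ) < 1/8)).comp
        (tendsto_natCast_atTop_atTop (R := ℝ)))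
    have hG : Tendsto (fun n : ℕ => (M + M/c) * (((n:ℝ) ^ ((1:ℝ)/8)) ^ (12:ℝ)
        * Real.exp (-b * (n:ℝ) ^ ((1:ℝ)/8)))) atTop (𝓝 0) := by
      simpa using hcomp.const_mul (M + M/c)
    apply squeeze_zero' ?_ ?_ hG
    · apply Eventually.of_forall
      intro n
      have : (0:ℝ) ≤ (n:ℝ) * M + M / c := by positivity
      exact mul_nonneg (Real.sqrt_nonneg _)
        (mul_nonneg this (pow_nonneg hr0.le _))
    · filter_upwards [eventually_ge_atTop 1] with n hn
      have hn0 : (0:ℝ) < n := by exact_mod_cast hn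
      have hn1 : (1:ℝ) ≤ n := by exact_mod_cast hn
      have hx0 : (0:ℝ) ≤ (n:ℝ) ^ ((1:ℝ)/8) := Real.rpow_nonneg hn0.le _
      -- bound the power of r by an exponential
      have hrV : (1 - c/2) ^ (vCut n) ≤ Real.exp (-b * (n:ℝ) ^ ((1:ℝ)/8)) := by
        have h1 : (1 - c/2) ^ (vCut n) = Real.exp ((vCut n : ℝ) * Real.log (1 - c/2)) := by
          rw [← Real.exp_log hr0, ← Real.exp_nat_mul, Real.exp_log hr0]
        rw [h1]
        apply Real.exp_le_exp.mpr
        rw [hbdef]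
        have hlog : Real.log (1 - c/2) ≤ 0 := Real.log_nonpos hr0.le hr1.le
        have hle := vCut_lb' n
        nlinarith
      -- bound the polynomial factor
      have hx12 : ((n:ℝ) ^ ((1:ℝ)/8)) ^ (12:ℝ) = (n:ℝ) ^ ((3:ℝ)/2) := by
        rw [← Real.rpow_mul hn0.le]
        norm_num
      have hn32 : (n:ℝ) ^ ((3:ℝ)/2) = Real.sqrt n * n := by
        rw [Real.sqrt_eq_rpow, show (3:ℝ)/2 = 1/2 + 1 by norm_num,
          Real.rpow_add hn0, Real.rpow_one]
      have hpoly : Real.sqrt n * ((n:ℝ) * M + M / c)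
          ≤ (M + M/c) * (((n:ℝ) ^ ((1:ℝ)/8)) ^ (12:ℝ)) := by
        rw [hx12, hn32]
        have hs := Real.sqrt_nonneg (n:ℝ)
        have hMc : (0:ℝ) ≤ M / c := by positivity
        nlinarith [mul_nonneg hs (by linarith : (0:ℝ) ≤ (n:ℝ) - 1)]
      calc Real.sqrt n * (((n:ℝ) * M + M / c) * (1 - c/2) ^ (vCut n))
          = Real.sqrt n * ((n:ℝ) * M + M / c) * (1 - c/2) ^ (vCut n) := by ring
        _ ≤ (M + M/c) * (((n:ℝ) ^ ((1:ℝ)/8)) ^ (12:ℝ))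
              * Real.exp (-b * (n:ℝ) ^ ((1:ℝ)/8)) := by
            apply mul_le_mul hpoly hrV (pow_nonneg hr0.le _)
            positivity
        _ = (M + M/c) * (((n:ℝ) ^ ((1:ℝ)/8)) ^ (12:ℝ)
              * Real.exp (-b * (n:ℝ) ^ ((1:ℝ)/8))) := by ring
  -- combine
  have hE : Tendsto (fun n : ℕ => Real.sqrt n *
      (2 * M * (vCut n : ℝ) ^ 3 / ((n:ℝ) - vCut n)
        + ((n:ℝ) * M + M / c) * (1 - c/2) ^ (vCut n))) atTop (𝓝 0) := by
    have h := hF1.add hF2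
    rw [add_zero] at h
    exact h.congr fun n => by ring
  haveI : Nonempty (Set.Icc c d) := (Set.nonempty_Icc.mpr hcd.le).to_subtype
  apply squeeze_zero' ?_ ?_ hE
  · exact Eventually.of_forall fun n => Real.iSup_nonneg fun p =>
      mul_nonneg (Real.sqrt_nonneg _) (abs_nonneg _)
  · filter_upwards [hkey] with n hn
    apply ciSup_le
    intro p
    exact mul_le_mul_of_nonneg_left (hn p p.2) (Real.sqrt_nonneg _)
end

section
/- Let n ∈ ℕ and p ∈ (0,1) with np ≥ 1, and let v be a positive integer with v ≤ n(1-p) + 1 and v < n. Then |Π_{j=1}^v (1 - (np - 1)/(n - j)) - (1-p)^v| ≤ (1-p)^{v-1} v² / (n - v). -/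
/-- for `n ∈ ℕ`, `p ∈ (0,1)` with `np ≥ 1`, and a positive integer `v`
with `v ≤ n(1-p)+1` and `v < n`,
`|∏_{j=1}^v (1 - (np-1)/(n-j)) - (1-p)^v| ≤ (1-p)^{v-1} v² / (n-v)`. -/
theorem abs_prod_sub_pow_le
    (n : ℕ) (p : ℝ) (hp : p ∈ Set.Ioo (0 : ℝ) 1) (hnp : 1 ≤ (n : ℝ) * p)
    (v : ℕ) (hv1 : 1 ≤ v) (hvle : (v : ℝ) ≤ (n : ℝ) * (1 - p) + 1) (hvn : v < n) :
    |(∏ j ∈ Finset.Icc 1 v, (1 - ((n : ℝ) * p - 1) / ((n : ℝ) - (j : ℝ)))) -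
        (1 - p) ^ v| ≤
      (1 - p) ^ (v - 1) * (v : ℝ) ^ 2 / ((n : ℝ) - (v : ℝ)) := by
  obtain ⟨hp0, hp1⟩ := hp
  induction v, hv1 using Nat.le_induction with
  | base =>
    have hn1 : (1 : ℝ) < (n : ℝ) := by exact_mod_cast hvn
    have hd : (0 : ℝ) < (n : ℝ) - 1 := by linarith
    rw [Finset.Icc_self, Finset.prod_singleton]
    have heq : (1 - ((n : ℝ) * p - 1) / ((n : ℝ) - ((1:ℕ) : ℝ))) - (1 - p) ^ 1
        = (1 - p) / ((n : ℝ) - 1) := by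
      push_cast
      field_simp
      ring
    rw [heq, abs_of_nonneg (div_nonneg (by linarith) hd.le)]
    have h2 : (1 - p) ^ (1 - 1) * (((1:ℕ)) : ℝ) ^ 2 / ((n : ℝ) - ((1:ℕ) : ℝ))
        = 1 / ((n : ℝ) - 1) := by
      norm_num
    rw [h2, div_le_div_iff₀ hd hd]
    nlinarith
  | succ v hv ih =>
    have hvn' : v < n := Nat.lt_of_succ_lt hvn
    have hvle' : (v : ℝ) ≤ (n : ℝ) * (1 - p) + 1 := by push_cast at hvle ⊢; linarith
    have IH := ih hvle' hvn'
    have hnv1 : (0 : ℝ) < (n : ℝ) - ((v : ℝ) + 1) := by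
      have : ((v + 1 : ℕ) : ℝ) < (n : ℝ) := by exact_mod_cast hvn
      push_cast at this; linarith
    have hnv : (0 : ℝ) < (n : ℝ) - (v : ℝ) := by linarith
    have hv1R : (1 : ℝ) ≤ (v : ℝ) := by exact_mod_cast hv
    have hvleR : ((v : ℝ) + 1) ≤ (n : ℝ) * (1 - p) + 1 := by
      have := hvle; push_cast at this; linarith
    rw [show v + 1 - 1 = v from by omega]
    push_cast
    set a : ℝ := 1 - ((n : ℝ) * p - 1) / ((n : ℝ) - ((v : ℝ) + 1)) with ha
    have hprod : (∏ j ∈ Finset.Icc 1 (v+1), (1 - ((n : ℝ) * p - 1) / ((n : ℝ) - (j : ℝ))))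
        = (∏ j ∈ Finset.Icc 1 v, (1 - ((n : ℝ) * p - 1) / ((n : ℝ) - (j : ℝ)))) * a := by
      rw [Finset.prod_Icc_succ_top (by omega)]
      push_cast [ha]
      ring_nf
    have haeq : a = (1 - p) + (1 - ((v : ℝ) + 1) * p) / ((n : ℝ) - ((v : ℝ) + 1)) := by
      rw [ha]; field_simp; ring
    have hale : a ≤ (1 - p) * ((n : ℝ) - (v : ℝ)) / ((n : ℝ) - ((v : ℝ) + 1)) := by
      have e : (1 - p) * ((n : ℝ) - (v : ℝ)) / ((n : ℝ) - ((v : ℝ) + 1)) - a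
          = (v : ℝ) * p / ((n : ℝ) - ((v : ℝ) + 1)) := by
        rw [ha]; field_simp; ring
      have h0 : 0 ≤ (v : ℝ) * p / ((n : ℝ) - ((v : ℝ) + 1)) := by positivity
      linarith [e ▸ h0]
    have hage : 0 ≤ a := by
      have hnum : 0 ≤ (n : ℝ) * (1 - p) - (v : ℝ) := by linarith
      have e : a = ((n : ℝ) * (1 - p) - (v : ℝ)) / ((n : ℝ) - ((v : ℝ) + 1)) := by
        rw [ha]; field_simp; ring
      rw [e]; positivity
    have habs : |a - (1 - p)| ≤ (v : ℝ) / ((n : ℝ) - ((v : ℝ) + 1)) := by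
      rw [haeq, show (1 - p) + (1 - ((v : ℝ) + 1) * p) / ((n : ℝ) - ((v : ℝ) + 1)) - (1 - p)
          = (1 - ((v : ℝ) + 1) * p) / ((n : ℝ) - ((v : ℝ) + 1)) from by ring,
        abs_div, abs_of_pos hnv1]
      have hnum : |1 - ((v : ℝ) + 1) * p| ≤ (v : ℝ) := by
        rw [abs_le]; constructor <;> nlinarith
      exact div_le_div_of_nonneg_right hnum hnv1.le
    have key : (∏ j ∈ Finset.Icc 1 (v+1), (1 - ((n : ℝ) * p - 1) / ((n : ℝ) - (j : ℝ))))
        - (1 - p) ^ (v + 1)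
        = a * ((∏ j ∈ Finset.Icc 1 v, (1 - ((n : ℝ) * p - 1) / ((n : ℝ) - (j : ℝ)))) - (1 - p) ^ v)
          + (1 - p) ^ v * (a - (1 - p)) := by
      rw [hprod]; ring
    rw [key]
    have h1p : (0:ℝ) ≤ 1 - p := by linarith
    have hpow : (0:ℝ) ≤ (1 - p) ^ v := pow_nonneg h1p v
    have hv0 : (0:ℝ) ≤ (v : ℝ) := Nat.cast_nonneg v
    have hpow1 : (1 - p) * (1 - p) ^ (v - 1) = (1 - p) ^ v := by
      rw [← pow_succ']
      congr 1
      omega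
    calc |a * ((∏ j ∈ Finset.Icc 1 v, (1 - ((n : ℝ) * p - 1) / ((n : ℝ) - (j : ℝ)))) - (1 - p) ^ v)
          + (1 - p) ^ v * (a - (1 - p))|
        ≤ a * |(∏ j ∈ Finset.Icc 1 v, (1 - ((n : ℝ) * p - 1) / ((n : ℝ) - (j : ℝ)))) - (1 - p) ^ v|
          + (1 - p) ^ v * |a - (1 - p)| := by
          refine (abs_add_le _ _).trans ?_
          rw [abs_mul, abs_mul, abs_of_nonneg hage, abs_of_nonneg hpow]
      _ ≤ ((1 - p) * ((n : ℝ) - (v : ℝ)) / ((n : ℝ) - ((v : ℝ) + 1)))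
            * ((1 - p) ^ (v - 1) * (v : ℝ) ^ 2 / ((n : ℝ) - (v : ℝ)))
          + (1 - p) ^ v * ((v : ℝ) / ((n : ℝ) - ((v : ℝ) + 1))) := by
          gcongr
      _ ≤ (1 - p) ^ v * ((v : ℝ) + 1) ^ 2 / ((n : ℝ) - ((v : ℝ) + 1)) := by
          have e1 : (1 - p) * ((n : ℝ) - (v : ℝ)) / ((n : ℝ) - ((v : ℝ) + 1))
              * ((1 - p) ^ (v - 1) * (v : ℝ) ^ 2 / ((n : ℝ) - (v : ℝ)))
              = ((1 - p) ^ v * (v : ℝ) ^ 2) / ((n : ℝ) - ((v : ℝ) + 1)) := by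
            rw [← hpow1]
            field_simp
          rw [e1, show (1 - p) ^ v * ((v : ℝ) / ((n : ℝ) - ((v : ℝ) + 1)))
              = ((1 - p) ^ v * (v : ℝ)) / ((n : ℝ) - ((v : ℝ) + 1)) from by ring,
            ← add_div]
          gcongr ?_ / _
          nlinarith [hpow, hv0]
end
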